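/- Let φ : ℝᵐ → ℝ be sublinear, λ ∈ ℝⁿ with ‖λ‖ = 1, and C = {(x,y) : φ(y) ≤ λᵀx}. If αᵀx + γᵀy ≤ δ is a non-trivial valid inequality for C, then α ≠ 0; and if additionally ‖α‖ = 1, then α = −λ and γ belongs to the subdifferential ∂φ(0), i.e., γᵀy ≤ φ(y) for all y. -/
import Mathlib


open RealInnerProductSpace

theorem valid_ineqs_of_epigraph_cone {n m : ℕ}
    (φ : EuclideanSpace ℝ (Fin m) → ℝ)
    (hconv : ConvexOn ℝ Set.univ φ)
    (hpos : ∀ t : ℝ, 0 ≤ t → ∀ y, φ (t • y) = t * φ y)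
    (lam : EuclideanSpace ℝ (Fin n)) (hlam : ‖lam‖ = 1)
    (C : Set (EuclideanSpace ℝ (Fin n) × EuclideanSpace ℝ (Fin m)))
    (hC : C = {p | φ p.2 ≤ ⟪lam, p.1⟫})
    (α : EuclideanSpace ℝ (Fin n)) (γ : EuclideanSpace ℝ (Fin m)) (δ : ℝ)
    (hnontriv : ¬(α = 0 ∧ γ = 0))
    (hvalid : ∀ p ∈ C, ⟪α, p.1⟫ + ⟪γ, p.2⟫ ≤ δ) :
    α ≠ 0 ∧ (‖α‖ = 1 → α = -lam ∧ ∀ y, ⟪γ, y⟫ ≤ φ y) := by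
  have hφ0 : φ 0 = 0 := by
    have h := hpos 0 le_rfl 0
    simpa using h
  have hδ : 0 ≤ δ := by
    have h := hvalid (0, 0) (by simp [hC, hφ0])
    simpa using h
  have hll : ⟪lam, lam⟫ = 1 := by
    rw [real_inner_self_eq_norm_sq, hlam]; norm_num
  have key : ∀ p ∈ C, ⟪α, p.1⟫ + ⟪γ, p.2⟫ ≤ 0 := by
    intro p hp
    by_contra h
    push_neg at h
    set s := ⟪α, p.1⟫ + ⟪γ, p.2⟫ with hs
    have hmem : ((((δ+1)/s) • p.1, ((δ+1)/s) • p.2) :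
        EuclideanSpace ℝ (Fin n) × EuclideanSpace ℝ (Fin m)) ∈ C := by
      rw [hC] at hp ⊢
      simp only [Set.mem_setOf_eq] at hp ⊢
      have ht : (0:ℝ) ≤ (δ+1)/s := by positivity
      rw [hpos _ ht, real_inner_smul_right]
      exact mul_le_mul_of_nonneg_left hp ht
    have h2 := hvalid _ hmem
    simp only [real_inner_smul_right] at h2
    have h3 : (δ+1)/s * s ≤ δ := by
      rw [hs]; ring_nf; ring_nf at h2; linarith
    rw [div_mul_cancel₀ _ (ne_of_gt h)] at h3
    linarith
  have hyC : ∀ y, ((φ y • lam, y) :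
      EuclideanSpace ℝ (Fin n) × EuclideanSpace ℝ (Fin m)) ∈ C := by
    intro y
    rw [hC]
    show φ y ≤ ⟪lam, φ y • lam⟫
    rw [real_inner_smul_right, hll, mul_one]
  have hkey2 : ∀ y, φ y * ⟪α, lam⟫ + ⟪γ, y⟫ ≤ 0 := by
    intro y
    have h := key _ (hyC y)
    rw [real_inner_smul_right] at h
    exact h
  have hαne : α ≠ 0 := by
    intro hα
    have hγ : γ ≠ 0 := fun hγ => hnontriv ⟨hα, hγ⟩
    have h := hkey2 γ
    rw [hα] at h
    simp only [inner_zero_left, mul_zero, zero_add] at h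
    have hn : 0 < ‖γ‖ := norm_pos_iff.2 hγ
    rw [real_inner_self_eq_norm_sq] at h
    nlinarith
  refine ⟨hαne, fun hα1 => ?_⟩
  have hx0 : ∀ x : EuclideanSpace ℝ (Fin n), 0 ≤ ⟪lam, x⟫ → ⟪α, x⟫ ≤ 0 := by
    intro x hx
    have h := key (x, 0) (by rw [hC]; simpa [hφ0] using hx)
    simpa using h
  set c := ⟪α, lam⟫ with hc
  have hcneg : c ≤ 0 := hx0 lam (by rw [hll]; norm_num)
  have hperp : ⟪lam, α - c • lam⟫ = 0 := by
    rw [inner_sub_right, real_inner_smul_right, hll, real_inner_comm]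
    ring
  have h1 : ⟪α, α - c • lam⟫ ≤ 0 := hx0 _ (le_of_eq hperp.symm)
  have h2 : ⟪α, -(α - c • lam)⟫ ≤ 0 := by
    refine hx0 _ ?_
    rw [inner_neg_right, hperp]; norm_num
  rw [inner_neg_right] at h2
  have h3 : ⟪α, α - c • lam⟫ = 0 := le_antisymm h1 (by linarith)
  have hαα : ⟪α, α⟫ = 1 := by
    rw [real_inner_self_eq_norm_sq, hα1]; norm_num
  have hc2 : c * c = 1 := by
    rw [inner_sub_right, real_inner_smul_right, ← hc] at h3
    nlinarith [hαα]
  have hcm1 : c = -1 := by nlinarith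
  have hαlam : α = -lam := by
    have hnorm : ⟪α + lam, α + lam⟫ = 0 := by
      rw [real_inner_add_add_self, hαα, hll, ← hc, hcm1]; ring
    have h0 : α + lam = 0 := inner_self_eq_zero.1 hnorm
    exact eq_neg_of_add_eq_zero_left h0
  refine ⟨hαlam, fun y => ?_⟩
  have h := hkey2 y
  rw [hcm1] at h
  linarith
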